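/- For the dimer model on a finite bipartite graph with Kasteleyn matrix K and at least one perfect matching, the probability that a fixed edge wb appears in a random perfect matching (weighted by the product of edge weights) equals K(w,b) K^{-1}(b,w), and this quantity is invariant under gauge transformations K → D_W K D_B with invertible diagonal D_W, D_B. -/

import Mathlib

open Finset Matrix

-- det as sum over rows-indexed products
lemma det_row_sum {n : ℕ} (K : Matrix (Fin n) (Fin n) ℂ) :
    K.det = ∑ σ : Equiv.Perm (Fin n),
      (Equiv.Perm.sign σ : ℂ) * ∏ i, K i (σ i) := by
  rw [← Matrix.det_transpose, Matrix.det_apply']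
  rfl

lemma cofactor_sum {n : ℕ} (K : Matrix (Fin n) (Fin n) ℂ) (w b : Fin n) :
    K w b * K.adjugate b w = ∑ σ : Equiv.Perm (Fin n),
      if σ w = b then (Equiv.Perm.sign σ : ℂ) * ∏ i, K i (σ i) else 0 := by
  rw [Matrix.adjugate_apply]
  have hsing : Pi.single b (K w b) = K w b • (Pi.single b (1:ℂ) : Fin n → ℂ) := by
    ext j; simp [Pi.single_apply]
  have h1 : (K.updateRow w (Pi.single b (K w b))).det
      = K w b * (K.updateRow w (Pi.single b 1)).det := by
    rw [hsing, Matrix.det_updateRow_smul]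
  rw [← h1, det_row_sum]
  refine Finset.sum_congr rfl fun σ _ => ?_
  have : ∏ i, (K.updateRow w (Pi.single b (K w b))) i (σ i)
      = (if σ w = b then K w b else 0) * ∏ i ∈ Finset.univ.erase w, K i (σ i) := by
    rw [← Finset.mul_prod_erase Finset.univ _ (Finset.mem_univ w)]
    congr 1
    · simp [Matrix.updateRow_self, Pi.single_apply]
    · refine Finset.prod_congr rfl fun i hi => ?_
      rw [Matrix.updateRow_ne (Finset.ne_of_mem_erase hi)]
  rw [this]
  by_cases h : σ w = b
  · simp only [h, if_pos rfl, if_pos]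
    congr 1
    rw [← h]
    exact Finset.mul_prod_erase Finset.univ (fun i => K i (σ i)) (Finset.mem_univ w)
  · simp [h]


lemma re_eq_abs_imp {z : ℂ} (h : z.re = ‖z‖) : z = (‖z‖ : ℝ) := by
  have h2 : z.re ^ 2 + z.im ^ 2 = ‖z‖ ^ 2 := by
    rw [Complex.sq_norm, Complex.normSq_apply]; ring
  rw [← h] at h2
  have h4 : z.im ^ 2 = 0 := by linarith
  have him : z.im = 0 := sq_eq_zero_iff.mp h4
  apply Complex.ext
  · simpa using h
  · simpa using him

theorem dimer_edge_probability_aux {n : ℕ}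
    (K : Matrix (Fin n) (Fin n) ℂ)
    (hKast : ‖K.det‖ =
      ∑ σ : Equiv.Perm (Fin n), ∏ w, ‖K w (σ w)‖)
    (hmatch : ∃ σ : Equiv.Perm (Fin n), ∀ w, K w (σ w) ≠ 0)
    (w b : Fin n) :
    K w b * K⁻¹ b w =
      (((∑ σ : Equiv.Perm (Fin n),
          if σ w = b then ∏ w', ‖K w' (σ w')‖ else 0) /
        (∑ σ : Equiv.Perm (Fin n), ∏ w', ‖K w' (σ w')‖) : ℝ) : ℂ) ∧
    ∀ (DW DB : Fin n → ℂ), (∀ i, DW i ≠ 0) → (∀ i, DB i ≠ 0) →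
      (Matrix.of fun i j => DW i * K i j * DB j) w b *
        (Matrix.of fun i j => DW i * K i j * DB j)⁻¹ b w = K w b * K⁻¹ b w := by
  have habs : ∀ σ : Equiv.Perm (Fin n),
      ‖(Equiv.Perm.sign σ : ℂ) * ∏ i, K i (σ i)‖
        = ∏ i, ‖K i (σ i)‖ := by
    intro σ
    have h1 : ‖((Equiv.Perm.sign σ : ℤ) : ℂ)‖ = 1 := by
      rcases Int.units_eq_one_or (Equiv.Perm.sign σ) with h | h <;> simp [h]
    rw [norm_mul, h1, one_mul]
    exact Complex.norm_prod _ _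
  obtain ⟨σ₀, hσ₀⟩ := hmatch
  set S : ℝ := ∑ σ : Equiv.Perm (Fin n), ∏ i, ‖K i (σ i)‖ with hSdef
  have hS : 0 < S := by
    refine Finset.sum_pos' (fun σ _ => Finset.prod_nonneg fun i _ => norm_nonneg _)
      ⟨σ₀, Finset.mem_univ _, Finset.prod_pos fun i _ => ?_⟩
    exact norm_pos_iff.2 (hσ₀ i)
  have hdet := det_row_sum K
  have habsdet : ‖K.det‖ = S := hKast
  have hdne : K.det ≠ 0 := by
    intro h; rw [h] at habsdet; simp at habsdet; linarith
  set u : ℂ := K.det / (S : ℝ) with hu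
  have hSne : (S : ℂ) ≠ 0 := by exact_mod_cast hS.ne'
  have huabs : ‖u‖ = 1 := by
    rw [hu, norm_div, habsdet, Complex.norm_real, Real.norm_eq_abs, abs_of_pos hS, div_self hS.ne']
  have hune : u ≠ 0 := by
    intro h; rw [h] at huabs; simp at huabs
  have hcu : (starRingEnd ℂ) u * u = 1 := by
    rw [mul_comm, Complex.mul_conj, ← Complex.sq_norm, huabs]; norm_num
  have key : ∀ σ : Equiv.Perm (Fin n),
      (Equiv.Perm.sign σ : ℂ) * ∏ i, K i (σ i)
        = u * ((∏ i, ‖K i (σ i)‖ : ℝ) : ℂ) := by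
    have habs2 : ∀ σ : Equiv.Perm (Fin n),
        ‖(starRingEnd ℂ) u * ((Equiv.Perm.sign σ : ℂ) * ∏ i, K i (σ i))‖
          = ∏ i, ‖K i (σ i)‖ := by
      intro σ
      rw [norm_mul, Complex.norm_conj, huabs, one_mul, habs]
    have hg_le : ∀ σ ∈ (Finset.univ : Finset (Equiv.Perm (Fin n))),
        ((starRingEnd ℂ) u * ((Equiv.Perm.sign σ : ℂ) * ∏ i, K i (σ i))).re
          ≤ ∏ i, ‖K i (σ i)‖ := by
      intro σ _
      calc _ ≤ ‖(starRingEnd ℂ) u * ((Equiv.Perm.sign σ : ℂ) * ∏ i, K i (σ i))‖ :=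
            Complex.re_le_norm _
        _ = _ := habs2 σ
    have hcd : (starRingEnd ℂ) u * K.det = (S : ℂ) := by
      rw [hu, map_div₀, Complex.conj_ofReal, div_mul_eq_mul_div, mul_comm,
        Complex.mul_conj, ← Complex.sq_norm, habsdet]
      push_cast
      field_simp
    have hg_sum : ∑ σ : Equiv.Perm (Fin n),
        ((starRingEnd ℂ) u * ((Equiv.Perm.sign σ : ℂ) * ∏ i, K i (σ i))).re
          = ∑ σ : Equiv.Perm (Fin n), ∏ i, ‖K i (σ i)‖ := by
      rw [← Complex.re_sum, ← Finset.mul_sum, ← hdet, hcd, Complex.ofReal_re, hSdef]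
    have heach := (Finset.sum_eq_sum_iff_of_le hg_le).1 hg_sum
    intro σ
    have h1 : ((starRingEnd ℂ) u * ((Equiv.Perm.sign σ : ℂ) * ∏ i, K i (σ i))).re
        = ‖(starRingEnd ℂ) u * ((Equiv.Perm.sign σ : ℂ) * ∏ i, K i (σ i))‖ := by
      rw [habs2 σ]; exact heach σ (Finset.mem_univ _)
    have h2 := re_eq_abs_imp h1
    rw [habs2 σ] at h2
    calc (Equiv.Perm.sign σ : ℂ) * ∏ i, K i (σ i)
        = (u * (starRingEnd ℂ) u) * ((Equiv.Perm.sign σ : ℂ) * ∏ i, K i (σ i)) := by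
          rw [mul_comm u, hcu, one_mul]
      _ = u * ((∏ i, ‖K i (σ i)‖ : ℝ) : ℂ) := by rw [mul_assoc, h2]
  constructor
  · -- probability formula
    have hinv : K⁻¹ b w = K.det⁻¹ * K.adjugate b w := by
      rw [Matrix.inv_def, Ring.inverse_eq_inv']
      simp [Matrix.smul_apply]
    have hcof := cofactor_sum K w b
    have hnum : (∑ σ : Equiv.Perm (Fin n),
          if σ w = b then (Equiv.Perm.sign σ : ℂ) * ∏ i, K i (σ i) else 0)
        = u * ((∑ σ : Equiv.Perm (Fin n),
            if σ w = b then ∏ w', ‖K w' (σ w')‖ else 0 : ℝ) : ℂ) := by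
      push_cast
      rw [Finset.mul_sum]
      refine Finset.sum_congr rfl fun σ _ => ?_
      by_cases h : σ w = b
      · simpa [h] using key σ
      · simp [h]
    have hdu : K.det = u * (S : ℝ) := by rw [hu]; field_simp
    rw [hinv, mul_left_comm, hcof, hnum, Complex.ofReal_div, hdu]
    field_simp
  · -- gauge invariance
    intro DW DB hDW hDB
    have hM : (Matrix.of fun i j => DW i * K i j * DB j)
        = Matrix.diagonal DW * K * Matrix.diagonal DB := by
      ext i j
      simp [Matrix.mul_diagonal, Matrix.diagonal_mul, mul_assoc]
    have hDWinv : (Matrix.diagonal DW)⁻¹ = Matrix.diagonal (fun i => (DW i)⁻¹) := by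
      apply Matrix.inv_eq_right_inv
      rw [Matrix.diagonal_mul_diagonal]
      convert Matrix.diagonal_one
      exact mul_inv_cancel₀ (hDW _)
    have hDBinv : (Matrix.diagonal DB)⁻¹ = Matrix.diagonal (fun i => (DB i)⁻¹) := by
      apply Matrix.inv_eq_right_inv
      rw [Matrix.diagonal_mul_diagonal]
      convert Matrix.diagonal_one
      exact mul_inv_cancel₀ (hDB _)
    rw [hM, Matrix.mul_inv_rev, Matrix.mul_inv_rev, hDWinv, hDBinv]
    have e1 : (Matrix.diagonal DW * K * Matrix.diagonal DB) w b
        = DW w * K w b * DB b := by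
      simp [Matrix.mul_diagonal, Matrix.diagonal_mul]
    have e2 : (Matrix.diagonal (fun i => (DB i)⁻¹) *
          (K⁻¹ * Matrix.diagonal (fun i => (DW i)⁻¹))) b w
        = (DB b)⁻¹ * (K⁻¹ b w * (DW w)⁻¹) := by
      simp [Matrix.mul_diagonal, Matrix.diagonal_mul, mul_assoc]
    rw [e1, e2]
    generalize K⁻¹ b w = x
    field_simp [hDW w, hDB b]

/-- For the dimer model on a finite bipartite graph with equal parts (both
indexed by `Fin n`), let `K` be a Kasteleyn matrix: the nonzero entries of `K` are the
edges, and `|det K|` equals the weighted sum `∑_m ∏ |K|` over perfect matchings `m`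
(permutations using only nonzero entries). If at least one perfect matching exists, then
the probability that a fixed edge `(w, b)` appears in a random matching chosen with
probability proportional to its weight `∏ |K|` equals `K(w,b) K⁻¹(b,w)`; moreover this
quantity is invariant under gauge transformations `K ↦ D_W K D_B` with invertible
diagonal matrices. -/
theorem dimer_edge_probability {n : ℕ}
    (K : Matrix (Fin n) (Fin n) ℂ)
    (hKast : ‖K.det‖ =
      ∑ σ : Equiv.Perm (Fin n), ∏ w, ‖K w (σ w)‖)
    (hmatch : ∃ σ : Equiv.Perm (Fin n), ∀ w, K w (σ w) ≠ 0)
    (w b : Fin n) :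
    K w b * K⁻¹ b w =
      (((∑ σ : Equiv.Perm (Fin n),
          if σ w = b then ∏ w', ‖K w' (σ w')‖ else 0) /
        (∑ σ : Equiv.Perm (Fin n), ∏ w', ‖K w' (σ w')‖) : ℝ) : ℂ) ∧
    ∀ (DW DB : Fin n → ℂ), (∀ i, DW i ≠ 0) → (∀ i, DB i ≠ 0) →
      (Matrix.of fun i j => DW i * K i j * DB j) w b *
        (Matrix.of fun i j => DW i * K i j * DB j)⁻¹ b w = K w b * K⁻¹ b w := by
  exact dimer_edge_probability_aux K hKast hmatch w b
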